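/- If a and b are positive integers with at least one of them even, then there exist polynomials F, G in ℤ[x₁,…,x_m] (with complex coefficients suffices) and an integer c ≥ 0 such that F·(Lᵃ + Mᵃ) + G·(Lᵇ + Mᵇ) = Lᶜ, where L and M are monomials in disjoint sets of variables; consequently any common factor of Lᵃ + Mᵃ and Lᵇ + Mᵇ in ℂ[x₁,…,x_m] is a monomial. -/

import Mathlib

open MvPolynomial

/-- Units in a multivariate polynomial ring over `ℂ` are constants. -/
lemma aux_isUnit_eq_C {n : ℕ} (D : MvPolynomial (Fin n) ℂ) (h : IsUnit D) :
    ∃ z : ℂ, D = C z := by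
  induction n with
  | zero => exact ⟨_, eq_C_of_isEmpty D⟩
  | succ n ih =>
    have h1 : IsUnit ((finSuccEquiv ℂ n) D) := h.map _
    rw [Polynomial.isUnit_iff] at h1
    obtain ⟨r, hr, hrD⟩ := h1
    obtain ⟨z, rfl⟩ := ih r hr
    refine ⟨z, ?_⟩
    have h2 : (finSuccEquiv ℂ n) (C z) = Polynomial.C (C z) := by
      simp [finSuccEquiv_apply]
    apply (finSuccEquiv ℂ n).injective
    rw [h2, ← hrD]

/-- `X i` is prime. -/
lemma aux_prime_X {m : ℕ} (i : Fin m) : Prime (X i : MvPolynomial (Fin m) ℂ) := by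
  rcases m with _ | n
  · exact i.elim0
  · rw [← MulEquiv.prime_iff ((renameEquiv ℂ (Equiv.swap i 0)).trans (finSuccEquiv ℂ n)).toMulEquiv]
    have : (((renameEquiv ℂ (Equiv.swap i 0)).trans (finSuccEquiv ℂ n)).toMulEquiv)
        (X i : MvPolynomial (Fin (n+1)) ℂ) = Polynomial.X := by
      simp [renameEquiv_apply, rename_X, Equiv.swap_apply_left, finSuccEquiv_X_zero]
    rw [this]
    exact Polynomial.prime_X

/-- Divisors of monomials with coefficient `1` are monomials. -/
lemma aux_dvd_monomial {m : ℕ} :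
    ∀ (n : ℕ) (t : Fin m →₀ ℕ), (t.sum fun _ e => e) ≤ n →
      ∀ D P : MvPolynomial (Fin m) ℂ, D * P = monomial t 1 →
        ∃ (s : Fin m →₀ ℕ) (z : ℂ), D = monomial s z := by
  intro n
  induction n with
  | zero =>
    intro t ht D P hDP
    have ht0 : t = 0 := by
      ext i
      by_cases hi : i ∈ t.support
      · have := (Finset.sum_eq_zero_iff).mp (Nat.le_zero.mp ht) i hi
        simpa using this
      · simpa using Finsupp.notMem_support_iff.mp hi
    subst ht0
    rw [monomial_zero', map_one] at hDP
    obtain ⟨z, hz⟩ := aux_isUnit_eq_C D (IsUnit.of_mul_eq_one P hDP)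
    exact ⟨0, z, by rw [hz, C_apply]⟩
  | succ n ih =>
    intro t ht D P hDP
    rcases eq_or_ne t 0 with h0 | h0
    · exact ih t (by simp [h0]) D P hDP
    · obtain ⟨i, hi⟩ := Finsupp.support_nonempty_iff.mpr h0
      have hti : 1 ≤ t i := Nat.one_le_iff_ne_zero.mpr (Finsupp.mem_support_iff.mp hi)
      set t' : Fin m →₀ ℕ := t - Finsupp.single i 1 with ht'
      have hsplit : Finsupp.single i 1 + t' = t := by
        ext j
        rcases eq_or_ne j i with rfl | hji
        · simp [ht', Finsupp.single_apply]
          omega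
        · simp [ht', Finsupp.single_apply, Ne.symm hji]
      have hsum : (t'.sum fun _ e => e) ≤ n := by
        have : ((Finsupp.single i 1 + t').sum fun _ e => e) = 1 + (t'.sum fun _ e => e) := by
          rw [Finsupp.sum_add_index' (fun _ => rfl) (fun _ _ _ => rfl)]
          simp
        rw [hsplit] at this
        omega
      have hmono : monomial t (1 : ℂ) = X i * monomial t' 1 := by
        rw [X, monomial_mul, one_mul, hsplit]
      have hdvd : (X i : MvPolynomial (Fin m) ℂ) ∣ D * P :=
        ⟨monomial t' 1, by rw [hDP, hmono]⟩
      have hXne : (X i : MvPolynomial (Fin m) ℂ) ≠ 0 := X_ne_zero i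
      rcases (aux_prime_X i).2.2 D P hdvd with ⟨D', rfl⟩ | ⟨P', rfl⟩
      · have hcancel : D' * P = monomial t' 1 := by
          apply mul_left_cancel₀ hXne
          rw [← mul_assoc, hDP, hmono]
        obtain ⟨s, z, hs⟩ := ih t' hsum D' P hcancel
        exact ⟨Finsupp.single i 1 + s, z, by
          rw [hs, X, monomial_mul, one_mul]⟩
      · have hcancel : D * P' = monomial t' 1 := by
          apply mul_left_cancel₀ hXne
          rw [show X i * (D * P') = D * (X i * P') by ring, hDP, hmono]
        exact ih t' hsum D P' hcancel

/-- If `L`, `M` are nonconstant monomials (with coefficient 1) in disjoint sets of the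
variables, and `a`, `b` are coprime positive integers not both odd, then
`F·(Lᵃ + Mᵃ) + G·(Lᵇ + Mᵇ) = Lᶜ` for some polynomials `F`, `G` and some `c ≥ 0`;
consequently any common factor of `Lᵃ + Mᵃ` and `Lᵇ + Mᵇ` is a monomial. -/
theorem common_factor_is_monomial (m : ℕ) (sL sM : Fin m →₀ ℕ)
    (hL : sL ≠ 0) (hM : sM ≠ 0) (hdisj : Disjoint sL.support sM.support)
    (a b : ℕ) (ha : 0 < a) (hb : 0 < b) (hab : Nat.Coprime a b)
    (hodd : ¬(Odd a ∧ Odd b)) :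
    (∃ (F G : MvPolynomial (Fin m) ℂ) (c : ℕ),
        F * ((monomial sL (1 : ℂ)) ^ a + (monomial sM (1 : ℂ)) ^ a) +
          G * ((monomial sL (1 : ℂ)) ^ b + (monomial sM (1 : ℂ)) ^ b) =
        (monomial sL (1 : ℂ)) ^ c) ∧
    (∀ D : MvPolynomial (Fin m) ℂ,
        D ∣ (monomial sL (1 : ℂ)) ^ a + (monomial sM (1 : ℂ)) ^ a →
        D ∣ (monomial sL (1 : ℂ)) ^ b + (monomial sM (1 : ℂ)) ^ b →
        ∃ (s : Fin m →₀ ℕ) (z : ℂ), D = monomial s z) := by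
  set L : MvPolynomial (Fin m) ℂ := monomial sL 1 with hLdef
  set M : MvPolynomial (Fin m) ℂ := monomial sM 1 with hMdef
  set P : MvPolynomial (Fin m) ℂ := L ^ a + M ^ a with hPdef
  set Q : MvPolynomial (Fin m) ℂ := L ^ b + M ^ b with hQdef
  -- `L` vanishes on the common zero locus of `P` and `Q`
  have hrad : L ∈ (Ideal.span {P, Q}).radical := by
    rw [← vanishingIdeal_zeroLocus_eq_radical (K := ℂ), mem_vanishingIdeal_iff]
    intro x hx
    have hP : eval x P = 0 := (mem_zeroLocus_iff.mp hx) P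
      (Ideal.subset_span (by simp))
    have hQ : eval x Q = 0 := (mem_zeroLocus_iff.mp hx) Q
      (Ideal.subset_span (by simp))
    set u : ℂ := eval x L with hu
    set v : ℂ := eval x M with hv
    have hA : u ^ a + v ^ a = 0 := by
      simpa [hPdef, map_add, map_pow] using hP
    have hB : u ^ b + v ^ b = 0 := by
      simpa [hQdef, map_add, map_pow] using hQ
    by_contra hune
    have hvne : v ≠ 0 := by
      intro hv0
      rw [hv0, zero_pow ha.ne', add_zero, pow_eq_zero_iff ha.ne'] at hA
      exact hune hA
    set w : ℂ := u / v with hw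
    have hwa : w ^ a = -1 := by
      rw [hw, div_pow]
      field_simp
      linear_combination hA
    have hwb : w ^ b = -1 := by
      rw [hw, div_pow]
      field_simp
      linear_combination hB
    have hw2a : w ^ (2 * a) = 1 := by
      rw [mul_comm, pow_mul, hwa]; ring
    have hw2b : w ^ (2 * b) = 1 := by
      rw [mul_comm, pow_mul, hwb]; ring
    have hdvd2 : orderOf w ∣ 2 := by
      have h1 := orderOf_dvd_of_pow_eq_one hw2a
      have h2 := orderOf_dvd_of_pow_eq_one hw2b
      have := Nat.dvd_gcd h1 h2
      rwa [Nat.gcd_mul_left, hab, mul_one] at this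
    have hw2 : w ^ 2 = 1 := orderOf_dvd_iff_pow_eq_one.mp hdvd2
    have heven : Even a ∨ Even b := by
      rcases Nat.even_or_odd a with h | h
      · exact Or.inl h
      · rcases Nat.even_or_odd b with h' | h'
        · exact Or.inr h'
        · exact absurd ⟨h, h'⟩ hodd
    rcases heven with ⟨k, hk⟩ | ⟨k, hk⟩
    · have : w ^ a = 1 := by
        rw [hk, show k + k = 2 * k by ring, pow_mul, hw2, one_pow]
      rw [hwa] at this
      norm_num at this
    · have : w ^ b = 1 := by
        rw [hk, show k + k = 2 * k by ring, pow_mul, hw2, one_pow]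
      rw [hwb] at this
      norm_num at this
  obtain ⟨c, hc⟩ := Ideal.mem_radical_iff.mp hrad
  obtain ⟨F, G, hFG⟩ := Ideal.mem_span_pair.mp hc
  refine ⟨⟨F, G, c, hFG⟩, ?_⟩
  intro D hDa hDb
  have hdvdLc : D ∣ L ^ c := by
    rw [← hFG]
    exact dvd_add (Dvd.dvd.mul_left hDa F) (Dvd.dvd.mul_left hDb G)
  have hLc : L ^ c = monomial (c • sL) 1 := by
    rw [hLdef, monomial_pow, one_pow]
  obtain ⟨P', hP'⟩ := hdvdLc
  rw [hLc] at hP'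
  exact aux_dvd_monomial ((c • sL).sum fun _ e => e) (c • sL) le_rfl D P' hP'.symm
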